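/- Under the stated setup, assume in addition that k has characteristic zero, that A is finitely generated as a k-algebra with a ℤ-grading A = ⊕_{w ∈ ℤ} A_w satisfying A_w = 0 for w > 0, that there is a positive integer w_1 with ρ(ξ)(A_w) ⊆ A_{w + w_1} for all ξ ∈ 𝔲 and w ∈ ℤ, and that the derivations ρ(ξ), ρ(η) commute for all ξ, η ∈ 𝔲. Let 𝔲' ⊆ 𝔲 be a subspace with quotient q : 𝔲 → 𝔰 := 𝔲/𝔲', and suppose the composition of q* ⊗ id : 𝔰* ⊗_k A → 𝔲* ⊗_k A with the projection 𝔲* ⊗_k A → coker(φ) is an isomorphism. Let A^𝔲 := {a ∈ A : ρ(ξ)(a) = 0 for all ξ ∈ 𝔲}. Then φ factors through the canonical surjection Ω_{A/k} → Ω_{A/A^𝔲}, and the induced A-linear map Ω_{A/A^𝔲} → 𝔲* ⊗_k A is injective. -/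

import Mathlib

noncomputable section

variable {k A 𝔲 : Type*}
variable [Field k] [CommRing A] [Algebra k A]
variable [AddCommGroup 𝔲] [Module k 𝔲]

/-- The derivation `A → 𝔲* ⊗ₖ A` (with `𝔲* ⊗ₖ A` represented by `𝔲 →ₗ[k] A`)
sending `b` to `ξ ↦ ρ(ξ)(b)`. -/
def coactDer (ρ : 𝔲 →ₗ[k] Derivation k A A) : Derivation k A (𝔲 →ₗ[k] A) where
  toLinearMap :=
    { toFun := fun b =>
        { toFun := fun ξ => ρ ξ b
          map_add' := fun ξ η => by simp
          map_smul' := fun c ξ => by simp }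
      map_add' := fun b c => by ext ξ; simp
      map_smul' := fun c b => by ext ξ; simp }
  map_one_eq_zero' := by ext ξ; simp
  leibniz' := fun a b => by
    ext ξ
    simp [Derivation.leibniz, smul_eq_mul, mul_comm]

/-- The infinitesimal action `φ : Ω_{A/k} → 𝔲* ⊗ₖ A`, determined by
`φ(a db) = (ξ ↦ a · ρ(ξ)(b))`. -/
def phiDer (ρ : 𝔲 →ₗ[k] Derivation k A A) :
    KaehlerDifferential k A →ₗ[A] (𝔲 →ₗ[k] A) :=
  (coactDer ρ).liftKaehlerDifferential

/-- Precomposition with the quotient map, `(𝔲/𝔲')* ⊗ₖ A → 𝔲* ⊗ₖ A`. -/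
def precompQ (𝔲' : Submodule k 𝔲) : ((𝔲 ⧸ 𝔲') →ₗ[k] A) →ₗ[A] (𝔲 →ₗ[k] A) where
  toFun f := f.comp 𝔲'.mkQ
  map_add' f g := by ext v; simp
  map_smul' a f := by ext v; simp

/-- The invariants `A^𝔲 = {a ∈ A : ρ(ξ)(a) = 0 for all ξ ∈ 𝔲}`, as a
`k`-subalgebra of `A`. -/
def invariants (ρ : 𝔲 →ₗ[k] Derivation k A A) : Subalgebra k A where
  carrier := {a | ∀ ξ : 𝔲, ρ ξ a = 0}
  mul_mem' := fun {a b} ha hb ξ => by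
    rw [Derivation.leibniz]
    simp [ha ξ, hb ξ]
  one_mem' := fun ξ => by simp
  add_mem' := fun {a b} ha hb ξ => by simp [ha ξ, hb ξ]
  zero_mem' := fun ξ => by simp
  algebraMap_mem' := fun c ξ => by simp

/-! ### Auxiliary lemmas -/

/-- The `k`-derivation `A → 𝔲* ⊗ₖ A`, viewed as a derivation over the invariants. -/
def invDer (ρ : 𝔲 →ₗ[k] Derivation k A A) :
    Derivation ↥(invariants ρ) A (𝔲 →ₗ[k] A) where
  toLinearMap :=
    { toFun := fun b => coactDer ρ b
      map_add' := fun b c => by simp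
      map_smul' := fun c b => by
        ext ξ
        have hc : ρ ξ (c : A) = 0 := c.2 ξ
        show ρ ξ (c • b) = (c • (coactDer ρ b)) ξ
        rw [Subalgebra.smul_def, smul_eq_mul, LinearMap.smul_apply, Subalgebra.smul_def,
          smul_eq_mul]
        show ρ ξ ((c : A) * b) = (c : A) * ρ ξ b
        rw [Derivation.leibniz, hc]
        simp }
  map_one_eq_zero' := by ext ξ; simp
  leibniz' := fun a b => by ext ξ; simp [Derivation.leibniz, smul_eq_mul, mul_comm]

lemma st10_iterate_map_zero (D : Derivation k A A) (n : ℕ) : (⇑D)^[n] (0 : A) = 0 :=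
  Function.iterate_fixed (map_zero D) n

lemma st10_iterate_eventually (D : Derivation k A A) {n N : ℕ} (h : n ≤ N) {a : A}
    (ha : (⇑D)^[n] a = 0) : (⇑D)^[N] a = 0 := by
  obtain ⟨m, rfl⟩ := Nat.exists_eq_add_of_le h
  rw [Nat.add_comm, Function.iterate_add_apply, ha, st10_iterate_map_zero]

/-- The Taylor coefficients `(-1)^j / j!`. -/
def st10_tc (k : Type*) [Field k] : ℕ → k := fun j => (-1 : k) ^ j * ((j.factorial : k))⁻¹

/-- The Taylor expansion argument: if `D` is a derivation with a slice `s`, `Q` is a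
`D`-stable subalgebra containing `s`, and `S` is a subalgebra containing `s` and all
`D`-constants of `Q`, then `S` contains every `D`-nilpotent element of `Q`. -/
lemma st10_taylor_mem [CharZero k] (D : Derivation k A A) (s : A) (hs : D s = 1)
    (Q S : Subalgebra k A) (hQD : ∀ a ∈ Q, D a ∈ Q) (hsQ : s ∈ Q) (hsS : s ∈ S)
    (hker : ∀ a ∈ Q, D a = 0 → a ∈ S) :
    ∀ n : ℕ, ∀ a ∈ Q, (⇑D)^[n] a = 0 → a ∈ S := by
  intro n
  induction n with
  | zero =>
    intro a _ h
    simp only [Function.iterate_zero, id_eq] at h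
    rw [h]
    exact S.zero_mem
  | succ n IH =>
    intro a haQ ha
    set c : ℕ → k := st10_tc k with hc
    have hcsucc : ∀ j : ℕ, c (j + 1) * ((j : k) + 1) = -c j := by
      intro j
      have h1 : ((j.factorial : k)) ≠ 0 := by
        exact_mod_cast Nat.cast_ne_zero.mpr (Nat.factorial_ne_zero j)
      have h2 : ((j : k) + 1) ≠ 0 := by
        have := Nat.cast_add_one_ne_zero (R := k) j
        exact_mod_cast this
      simp only [hc, st10_tc, Nat.factorial_succ, pow_succ]
      push_cast
      field_simp
    have hiterQ : ∀ j : ℕ, (⇑D)^[j] a ∈ Q := by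
      intro j
      induction j with
      | zero => simpa using haQ
      | succ j ih => rw [Function.iterate_succ_apply']; exact hQD _ ih
    set e : A := ∑ j ∈ Finset.range (n + 1), c j • (s ^ j * (⇑D)^[j] a) with he
    have heQ : e ∈ Q := by
      rw [he]
      exact sum_mem fun j _ => Subalgebra.smul_mem Q (Q.mul_mem (Q.pow_mem hsQ j) (hiterQ j)) _
    have hDe : D e = 0 := by
      have hterm : ∀ j : ℕ, D (c j • (s ^ j * (⇑D)^[j] a))
          = c j • (s ^ j * (⇑D)^[j + 1] a)
            + (c j * (j : k)) • (s ^ (j - 1) * (⇑D)^[j] a) := by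
        intro j
        rw [Derivation.map_smul, Derivation.leibniz, Derivation.leibniz_pow, hs,
          ← Function.iterate_succ_apply' (⇑D) j a, mul_smul, Nat.cast_smul_eq_nsmul,
          ← smul_add]
        congr 1
        simp only [smul_eq_mul, nsmul_eq_mul, smul_smul, mul_one]
        ring
      calc D e = ∑ j ∈ Finset.range (n + 1), (c j • (s ^ j * (⇑D)^[j + 1] a)
            + (c j * (j : k)) • (s ^ (j - 1) * (⇑D)^[j] a)) := by
            rw [he, map_sum]
            exact Finset.sum_congr rfl fun j _ => hterm j
        _ = (∑ j ∈ Finset.range (n + 1), c j • (s ^ j * (⇑D)^[j + 1] a))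
            + ∑ j ∈ Finset.range (n + 1), (c j * (j : k)) • (s ^ (j - 1) * (⇑D)^[j] a) :=
            Finset.sum_add_distrib
        _ = 0 := by
            rw [Finset.sum_range_succ, Finset.sum_range_succ']
            simp only [ha, mul_zero, smul_zero, add_zero, Nat.cast_zero, zero_smul,
              Nat.add_sub_cancel, Nat.cast_add, Nat.cast_one]
            rw [← Finset.sum_add_distrib]
            apply Finset.sum_eq_zero
            intro j hj
            rw [hcsucc j, neg_smul]
            exact add_neg_cancel _
    have heS : e ∈ S := hker e heQ hDe
    have hrep : a = e - ∑ j ∈ Finset.range n,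
        c (j + 1) • (s ^ (j + 1) * (⇑D)^[j + 1] a) := by
      rw [he, Finset.sum_range_succ']
      simp only [hc, st10_tc, pow_zero, Nat.factorial_zero, Nat.cast_one, inv_one, mul_one,
        one_mul, Function.iterate_zero, id_eq, one_smul]
      rw [add_sub_cancel_left]
    rw [hrep]
    refine sub_mem heS (sum_mem fun j _ => ?_)
    refine Subalgebra.smul_mem S (S.mul_mem (S.pow_mem hsS _) ?_) _
    refine IH _ (hiterQ _) ?_
    rw [← Function.iterate_add_apply]
    exact st10_iterate_eventually D (by omega) ha

section Graded
variable (𝒜 : ℤ → Submodule k A) [GradedAlgebra 𝒜]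

lemma st10_pos_zero (hneg : ∀ w : ℤ, 0 < w → 𝒜 w = ⊥) {w : ℤ} (hw : 0 < w) {x : A}
    (hx : x ∈ 𝒜 w) : x = 0 := by
  rw [hneg w hw] at hx
  simpa using hx

lemma st10_proj_of_mem {x : A} {i : ℤ} (hx : x ∈ 𝒜 i) (j : ℤ) :
    (DirectSum.decompose 𝒜 x j : A) = if i = j then x else 0 := by
  split_ifs with h
  · subst h; exact DirectSum.decompose_of_mem_same 𝒜 hx
  · exact DirectSum.decompose_of_mem_ne 𝒜 hx h

lemma st10_proj_zero_mul (hneg : ∀ w : ℤ, 0 < w → 𝒜 w = ⊥) (a b : A) :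
    (DirectSum.decompose 𝒜 (a * b) 0 : A)
      = (DirectSum.decompose 𝒜 a 0 : A) * (DirectSum.decompose 𝒜 b 0 : A) := by
  induction a using DirectSum.Decomposition.inductionOn 𝒜 with
  | zero => simp
  | @homogeneous u a =>
    induction b using DirectSum.Decomposition.inductionOn 𝒜 with
    | zero => simp
    | @homogeneous v b =>
      have hab : (a : A) * (b : A) ∈ 𝒜 (u + v) := SetLike.mul_mem_graded a.2 b.2
      rw [st10_proj_of_mem 𝒜 hab, st10_proj_of_mem 𝒜 a.2, st10_proj_of_mem 𝒜 b.2]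
      by_cases hu : u = 0 <;> by_cases hv : v = 0
      · subst hu; subst hv; simp
      · subst hu; rw [if_pos rfl, if_neg hv, mul_zero, if_neg (by omega)]
      · subst hv; rw [if_neg hu, if_pos rfl, zero_mul, if_neg (by omega)]
      · rw [if_neg hu, if_neg hv, mul_zero]
        split_ifs with h
        · rcases lt_or_ge 0 u with hu' | hu'
          · rw [st10_pos_zero 𝒜 hneg hu' a.2, zero_mul]
          · rw [st10_pos_zero 𝒜 hneg (by omega) b.2, mul_zero]
        · rfl
    | add x y hx hy =>
      simp only [mul_add, DirectSum.decompose_add, DirectSum.add_apply, Submodule.coe_add, hx, hy]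
  | add x y hx hy =>
    simp only [add_mul, DirectSum.decompose_add, DirectSum.add_apply, Submodule.coe_add, hx, hy]

lemma st10_proj_zero_one : (DirectSum.decompose 𝒜 (1 : A) 0 : A) = 1 :=
  DirectSum.decompose_of_mem_same 𝒜 (SetLike.one_mem_graded 𝒜)

lemma st10_der_proj (ρ : 𝔲 →ₗ[k] Derivation k A A) (w₁ : ℤ)
    (hder : ∀ (ξ : 𝔲) (w : ℤ) (a : A), a ∈ 𝒜 w → ρ ξ a ∈ 𝒜 (w + w₁))
    (ξ : 𝔲) (w : ℤ) (b : A) :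
    ρ ξ (DirectSum.decompose 𝒜 b w : A)
      = (DirectSum.decompose 𝒜 (ρ ξ b) (w + w₁) : A) := by
  induction b using DirectSum.Decomposition.inductionOn 𝒜 with
  | zero => simp
  | @homogeneous v b =>
    rw [st10_proj_of_mem 𝒜 b.2, st10_proj_of_mem 𝒜 (hder ξ v b b.2)]
    split_ifs with h1 h2 h3
    · rfl
    · omega
    · omega
    · simp
  | add x y hx hy =>
    simp only [DirectSum.decompose_add, DirectSum.add_apply, Submodule.coe_add, map_add, hx, hy]

lemma st10_nil_of_graded (ρ : 𝔲 →ₗ[k] Derivation k A A) (w₁ : ℤ) (hw₁ : 0 < w₁)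
    (hneg : ∀ w : ℤ, 0 < w → 𝒜 w = ⊥)
    (hder : ∀ (ξ : 𝔲) (w : ℤ) (a : A), a ∈ 𝒜 w → ρ ξ a ∈ 𝒜 (w + w₁))
    (ξ : 𝔲) (a : A) : ∃ n, (⇑(ρ ξ))^[n] a = 0 := by
  induction a using DirectSum.Decomposition.inductionOn 𝒜 with
  | zero => exact ⟨0, rfl⟩
  | @homogeneous w a =>
    have key : ∀ n : ℕ, (⇑(ρ ξ))^[n] (a : A) ∈ 𝒜 (w + n * w₁) := by
      intro n
      induction n with
      | zero => simpa using a.2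
      | succ n ih =>
        rw [Function.iterate_succ_apply']
        have := hder ξ _ _ ih
        convert this using 2
        push_cast
        ring
    refine ⟨((-w).toNat + 1), st10_pos_zero 𝒜 hneg ?_ (key _)⟩
    have h1 : ((-w).toNat : ℤ) ≥ -w := Int.self_le_toNat _
    have h2 : ((-w).toNat : ℤ) ≥ 0 := by exact_mod_cast Nat.zero_le _
    push_cast
    nlinarith
  | add x y hx hy =>
    obtain ⟨n, hn⟩ := hx
    obtain ⟨m, hm⟩ := hy
    refine ⟨max n m, ?_⟩
    have : ∀ (N : ℕ) (u v : A), (⇑(ρ ξ))^[N] (u + v) = (⇑(ρ ξ))^[N] u + (⇑(ρ ξ))^[N] v := by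
      intro N
      induction N with
      | zero => simp
      | succ N ih =>
        intro u v
        rw [Function.iterate_succ_apply, map_add, ih, Function.iterate_succ_apply,
          Function.iterate_succ_apply]
    rw [this, st10_iterate_eventually _ (le_max_left n m) hn,
      st10_iterate_eventually _ (le_max_right n m) hm, add_zero]

lemma st10_slice_extract (ρ : 𝔲 →ₗ[k] Derivation k A A) (w₁ : ℤ) (hw₁ : 0 < w₁)
    (hneg : ∀ w : ℤ, 0 < w → 𝒜 w = ⊥)
    (hder : ∀ (ξ : 𝔲) (w : ℤ) (a : A), a ∈ 𝒜 w → ρ ξ a ∈ 𝒜 (w + w₁))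
    (x : KaehlerDifferential k A) :
    ∃ s : A, s ∈ 𝒜 (-w₁) ∧
      ∀ ξ : 𝔲, ρ ξ s = (DirectSum.decompose 𝒜 ((phiDer ρ x) ξ) 0 : A) := by
  have hx : x ∈ Submodule.span A (Set.range (KaehlerDifferential.D k A)) := by
    rw [KaehlerDifferential.span_range_derivation]; trivial
  refine Submodule.span_induction ?_ ?_ ?_ ?_ hx
  · rintro _ ⟨b, rfl⟩
    refine ⟨(DirectSum.decompose 𝒜 b (-w₁) : A), (DirectSum.decompose 𝒜 b (-w₁)).2, fun ξ => ?_⟩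
    rw [st10_der_proj 𝒜 ρ w₁ hder, neg_add_cancel]
    have hphi : (phiDer ρ) ((KaehlerDifferential.D k A) b) = coactDer ρ b :=
      Derivation.liftKaehlerDifferential_comp_D _ _
    rw [hphi]
    rfl
  · exact ⟨0, zero_mem _, fun ξ => by simp⟩
  · rintro x y - - ⟨s, hs, hss⟩ ⟨t, ht, htt⟩
    refine ⟨s + t, add_mem hs ht, fun ξ => ?_⟩
    rw [map_add, map_add, LinearMap.add_apply, hss ξ, htt ξ]
    simp [DirectSum.decompose_add]
  · rintro a x - ⟨s, hs, hss⟩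
    refine ⟨(DirectSum.decompose 𝒜 a 0 : A) * s, ?_, fun ξ => ?_⟩
    · have := SetLike.mul_mem_graded (DirectSum.decompose 𝒜 a 0).2 hs
      rwa [zero_add] at this
    · have hzero : ρ ξ (DirectSum.decompose 𝒜 a 0 : A) = 0 := by
        rw [st10_der_proj 𝒜 ρ w₁ hder, zero_add]
        exact st10_pos_zero 𝒜 hneg hw₁ (DirectSum.decompose 𝒜 (ρ ξ a) w₁).2
      rw [Derivation.leibniz, hzero, smul_zero, add_zero, smul_eq_mul, hss ξ, map_smul,
        LinearMap.smul_apply, smul_eq_mul, st10_proj_zero_mul 𝒜 hneg]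

end Graded

set_option maxHeartbeats 2000000 in
/-- Under the hypotheses of Statement 9, the infinitesimal
action `φ : Ω_{A/k} → 𝔲* ⊗ₖ A` factors through the canonical surjection
`Ω_{A/k} → Ω_{A/A^𝔲}`, and the induced `A`-linear map `Ω_{A/A^𝔲} → 𝔲* ⊗ₖ A`
is injective. -/
theorem statement10 [CharZero k] [FiniteDimensional k 𝔲]
    [Algebra.FiniteType k A]
    (ρ : 𝔲 →ₗ[k] Derivation k A A)
    (𝒜 : ℤ → Submodule k A) [GradedAlgebra 𝒜]
    (hneg : ∀ w : ℤ, 0 < w → 𝒜 w = ⊥)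
    (w₁ : ℤ) (hw₁ : 0 < w₁)
    (hder : ∀ (ξ : 𝔲) (w : ℤ) (a : A), a ∈ 𝒜 w → ρ ξ a ∈ 𝒜 (w + w₁))
    (hcomm : ∀ ξ η : 𝔲, ∀ a : A, ρ ξ (ρ η a) = ρ η (ρ ξ a))
    (𝔲' : Submodule k 𝔲)
    (hiso : Function.Bijective
      ⇑((LinearMap.range (phiDer ρ)).mkQ ∘ₗ precompQ (A := A) 𝔲')) :
    ∃ ψ : KaehlerDifferential ↥(invariants ρ) A →ₗ[A] (𝔲 →ₗ[k] A),
      ψ ∘ₗ KaehlerDifferential.map k ↥(invariants ρ) A A = phiDer ρ ∧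
      Function.Injective ⇑ψ := by
  classical
  have hphiD : ∀ b : A, (phiDer ρ) (KaehlerDifferential.D k A b) = coactDer ρ b :=
    fun b => Derivation.liftKaehlerDifferential_comp_D _ _
  -- Step 1 : anything killed by 𝔲' is killed by all of 𝔲.
  have hINV : ∀ a : A, (∀ x : ↥𝔲', ρ (x : 𝔲) a = 0) → a ∈ invariants ρ := by
    intro a ha
    have hker : 𝔲' ≤ LinearMap.ker (coactDer ρ a) := by
      intro x hx
      rw [LinearMap.mem_ker]
      exact ha ⟨x, hx⟩
    have hgf : precompQ (A := A) 𝔲' (𝔲'.liftQ (coactDer ρ a) hker) = coactDer ρ a := by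
      ext ξ
      show (𝔲'.liftQ (coactDer ρ a) hker) (𝔲'.mkQ ξ) = coactDer ρ a ξ
      rw [Submodule.mkQ_apply, Submodule.liftQ_apply]
    have hz : ((LinearMap.range (phiDer ρ)).mkQ ∘ₗ precompQ (A := A) 𝔲')
        (𝔲'.liftQ (coactDer ρ a) hker) = 0 := by
      rw [LinearMap.comp_apply, hgf, Submodule.mkQ_apply, Submodule.Quotient.mk_eq_zero]
      exact ⟨KaehlerDifferential.D k A a, hphiD a⟩
    have hg0 : 𝔲'.liftQ (coactDer ρ a) hker = 0 := by
      apply hiso.1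
      rw [hz, map_zero]
    have hf0 : coactDer ρ a = 0 := by rw [← hgf, hg0, map_zero]
    intro η
    show coactDer ρ a η = 0
    rw [hf0]
    rfl
  -- Step 2 : a basis of 𝔲' and homogeneous slices
  obtain ⟨m, ⟨bb⟩⟩ : ∃ m : ℕ, Nonempty (Module.Basis (Fin m) k ↥𝔲') :=
    ⟨_, ⟨Module.finBasis k ↥𝔲'⟩⟩
  obtain ⟨qc, hqc⟩ := Submodule.exists_isCompl 𝔲'
  have hslice : ∀ i : Fin m, ∃ s : A, s ∈ 𝒜 (-w₁) ∧
      ∀ l : Fin m, ρ (bb l : 𝔲) s = if l = i then 1 else 0 := by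
    intro i
    set π : 𝔲 →ₗ[k] ↥𝔲' := 𝔲'.linearProjOfIsCompl qc hqc with hπ
    set f : 𝔲 →ₗ[k] A := (Algebra.linearMap k A) ∘ₗ ((bb.coord i) ∘ₗ π) with hf
    obtain ⟨g, hg⟩ := hiso.2 (((LinearMap.range (phiDer ρ)).mkQ) f)
    rw [LinearMap.comp_apply, Submodule.mkQ_apply, Submodule.mkQ_apply,
      Submodule.Quotient.eq] at hg
    have hmem : f - precompQ (A := A) 𝔲' g ∈ LinearMap.range (phiDer ρ) := by
      have := (LinearMap.range (phiDer ρ)).neg_mem hg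
      rwa [neg_sub] at this
    obtain ⟨x, hx⟩ := hmem
    obtain ⟨s, hsmem, hs⟩ := st10_slice_extract 𝒜 ρ w₁ hw₁ hneg hder x
    refine ⟨s, hsmem, fun l => ?_⟩
    have h1 : (precompQ (A := A) 𝔲' g) ((bb l : 𝔲)) = 0 := by
      show g (𝔲'.mkQ (bb l : 𝔲)) = 0
      rw [Submodule.mkQ_apply, (Submodule.Quotient.mk_eq_zero 𝔲').2 (bb l).2, map_zero]
    have h2 : f ((bb l : 𝔲)) = algebraMap k A (if l = i then 1 else 0) := by
      rw [hf]
      simp only [LinearMap.comp_apply]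
      rw [hπ]
      rw [show (𝔲'.linearProjOfIsCompl qc hqc) (bb l : 𝔲) = bb l from
        Submodule.projectionOnto_apply_left hqc (bb l)]
      rw [Module.Basis.coord_apply, Module.Basis.repr_self, Finsupp.single_apply]
      rfl
    rw [hs ((bb l : 𝔲)), hx, LinearMap.sub_apply, h1, sub_zero, h2]
    split_ifs
    · rw [map_one]
      exact st10_proj_zero_one 𝒜
    · rw [map_zero]
      simp
  choose sf hsfmem hsfval using hslice
  -- Step 3 : A is generated by the invariants and the slices
  set T : Subalgebra k A :=
    Algebra.adjoin k (((invariants ρ : Subalgebra k A) : Set A) ∪ Set.range sf) with hT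
  have hTtop : ∀ a : A, a ∈ T := by
    have key : ∀ l : ℕ, l ≤ m → ∀ a : A,
        (∀ i : Fin m, l ≤ (i : ℕ) → ρ (bb i : 𝔲) a = 0) → a ∈ T := by
      intro l
      induction l with
      | zero =>
        intro _ a ha
        have hbasis : ((coactDer ρ a).comp 𝔲'.subtype) = 0 :=
          bb.ext fun i => ha i (Nat.zero_le _)
        refine Algebra.subset_adjoin (Or.inl ?_)
        refine hINV a fun x => ?_
        exact LinearMap.ext_iff.1 hbasis x
      | succ l IH =>
        intro hl a ha
        have hi0lt : l < m := by omega
        set i0 : Fin m := ⟨l, hi0lt⟩ with hi0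
        set Q : Subalgebra k A :=
          { carrier := {b : A | ∀ i : Fin m, l + 1 ≤ (i : ℕ) → ρ (bb i : 𝔲) b = 0}
            mul_mem' := fun {x y} hx hy i hi => by
              rw [Derivation.leibniz, hx i hi, hy i hi]
              simp
            one_mem' := fun i hi => by simp
            add_mem' := fun {x y} hx hy i hi => by
              rw [map_add, hx i hi, hy i hi, add_zero]
            zero_mem' := fun i hi => by simp
            algebraMap_mem' := fun c i hi => Derivation.map_algebraMap _ c } with hQ
        obtain ⟨n, hn⟩ := st10_nil_of_graded 𝒜 ρ w₁ hw₁ hneg hder ((bb i0 : 𝔲)) a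
        refine st10_taylor_mem (ρ (bb i0 : 𝔲)) (sf i0) ?_ Q T ?_ ?_ ?_ ?_ n a ?_ hn
        · rw [hsfval i0 i0, if_pos rfl]
        · intro b hb i hi
          rw [hcomm, hb i hi, map_zero]
        · intro i hi
          rw [hsfval i0 i, if_neg]
          intro hcon
          rw [hcon] at hi
          have : (i0 : ℕ) = l := rfl
          omega
        · exact Algebra.subset_adjoin (Or.inr ⟨i0, rfl⟩)
        · intro b hb hDb
          refine IH (by omega) b fun i hi => ?_
          have hval : (i0 : ℕ) = l := rfl
          rcases Nat.eq_or_lt_of_le hi with heq | hlt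
          · have hieq : i = i0 := Fin.ext (by omega)
            rw [hieq]
            exact hDb
          · exact hb i (by omega)
        · exact ha
    intro a
    exact key m le_rfl a fun i hi => absurd hi (Nat.not_le.2 i.isLt)
  -- Step 4 : the differentials of the slices span Ω_{A/A^𝔲}
  have hMtop : Submodule.span A (Set.range fun i : Fin m =>
      (KaehlerDifferential.D ↥(invariants ρ) A) (sf i)) = ⊤ := by
    set M := Submodule.span A (Set.range fun i : Fin m =>
      (KaehlerDifferential.D ↥(invariants ρ) A) (sf i)) with hM
    have hdmem : ∀ a : A, (KaehlerDifferential.D ↥(invariants ρ) A) a ∈ M := by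
      set T' : Subalgebra k A :=
        { carrier := {a : A | (KaehlerDifferential.D ↥(invariants ρ) A) a ∈ M}
          mul_mem' := fun {x y} hx hy => by
            show (KaehlerDifferential.D ↥(invariants ρ) A) (x * y) ∈ M
            rw [Derivation.leibniz]
            exact M.add_mem (M.smul_mem _ hy) (M.smul_mem _ hx)
          one_mem' := by
            show (KaehlerDifferential.D ↥(invariants ρ) A) 1 ∈ M
            rw [Derivation.map_one_eq_zero]
            exact M.zero_mem
          add_mem' := fun {x y} hx hy => by
            show (KaehlerDifferential.D ↥(invariants ρ) A) (x + y) ∈ M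
            rw [map_add]
            exact M.add_mem hx hy
          zero_mem' := by
            show (KaehlerDifferential.D ↥(invariants ρ) A) 0 ∈ M
            rw [map_zero]
            exact M.zero_mem
          algebraMap_mem' := fun c => by
            show (KaehlerDifferential.D ↥(invariants ρ) A) (algebraMap k A c) ∈ M
            rw [IsScalarTower.algebraMap_apply k ↥(invariants ρ) A c,
              Derivation.map_algebraMap]
            exact M.zero_mem } with hT'
      intro a
      have hle : T ≤ T' := by
        rw [hT]
        apply Algebra.adjoin_le
        rintro x (hx | ⟨i, rfl⟩)
        · show (KaehlerDifferential.D ↥(invariants ρ) A) x ∈ M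
          have hxeq : x = algebraMap ↥(invariants ρ) A ⟨x, hx⟩ := rfl
          rw [hxeq, Derivation.map_algebraMap]
          exact M.zero_mem
        · exact Submodule.subset_span ⟨i, rfl⟩
      exact hle (hTtop a)
    rw [eq_top_iff, ← KaehlerDifferential.span_range_derivation]
    refine Submodule.span_le.2 ?_
    rintro _ ⟨a, rfl⟩
    exact hdmem a
  -- Step 5 : conclusion
  refine ⟨(invDer ρ).liftKaehlerDifferential, ?_, ?_⟩
  · apply Derivation.liftKaehlerDifferential_unique
    ext a ξ
    show (invDer ρ).liftKaehlerDifferential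
        ((KaehlerDifferential.map k ↥(invariants ρ) A A) ((KaehlerDifferential.D k A) a)) ξ
      = (phiDer ρ) ((KaehlerDifferential.D k A) a) ξ
    rw [KaehlerDifferential.map_D, Algebra.algebraMap_self_apply]
    show (invDer ρ).liftKaehlerDifferential (KaehlerDifferential.D _ A a) ξ
      = (coactDer ρ).liftKaehlerDifferential (KaehlerDifferential.D k A a) ξ
    rw [Derivation.liftKaehlerDifferential_comp_D, Derivation.liftKaehlerDifferential_comp_D]
    rfl
  · have hker0 : ∀ z, (invDer ρ).liftKaehlerDifferential z = 0 → z = 0 := by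
      intro z hz
      have hzM : z ∈ Submodule.span A (Set.range fun i : Fin m =>
          (KaehlerDifferential.D ↥(invariants ρ) A) (sf i)) := by
        rw [hMtop]
        trivial
      obtain ⟨c, hc⟩ := (Submodule.mem_span_range_iff_exists_fun A).1 hzM
      have hcl : ∀ l : Fin m, c l = 0 := by
        intro l
        have hv : ∀ i : Fin m, ((invDer ρ) (sf i)) ((bb l : 𝔲)) = if l = i then 1 else 0 :=
          fun i => hsfval i l
        have h1 : (((invDer ρ).liftKaehlerDifferential) z) ((bb l : 𝔲)) = c l := by
          rw [← hc, map_sum]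
          simp only [map_smul, Derivation.liftKaehlerDifferential_comp_D]
          rw [LinearMap.sum_apply]
          simp only [LinearMap.smul_apply, smul_eq_mul]
          rw [Finset.sum_congr rfl (fun i _ => by rw [hv i])]
          simp [Finset.sum_ite_eq]
        rw [hz] at h1
        simpa using h1.symm
      rw [← hc]
      refine Finset.sum_eq_zero fun i _ => ?_
      rw [hcl i, zero_smul]
    intro x y hxy
    have := hker0 (x - y) (by rw [map_sub, hxy, sub_self])
    exact sub_eq_zero.1 this
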